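/- Let A = ℝ[X, Y, Z]/(X² + Y² + Z² − 1). If the unimodular row (x, y, z) were completable to a matrix in GL_3(A), then the kernel P of the map A³ → A given by (x, y, z) would be free of rank 2, and a surjection P → A would yield polynomials h_1, h_2, h_3 with x h_1 + y h_2 + z h_3 = 0 in A and ⟨h_1, h_2, h_3⟩ = A; evaluating at points of S² gives a nowhere-vanishing continuous tangent vector field on S². -/
import Mathlib


open MvPolynomial

/-- The defining polynomial of the 2-sphere, `X² + Y² + Z² - 1`. -/
noncomputable def spherePoly : MvPolynomial (Fin 3) ℝ :=
  X 0 ^ 2 + X 1 ^ 2 + X 2 ^ 2 - 1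

/-- The coordinate ring `ℝ[X,Y,Z]/(X² + Y² + Z² - 1)` of the real 2-sphere. -/
abbrev SphereRing : Type _ := MvPolynomial (Fin 3) ℝ ⧸ Ideal.span {spherePoly}

/-- The canonical surjection onto the coordinate ring of the sphere. -/
noncomputable def sphereMk : MvPolynomial (Fin 3) ℝ →+* SphereRing :=
  Ideal.Quotient.mk (Ideal.span {spherePoly})

/-- The linear map `A³ → A` given by the row `(x, y, z)`. -/
noncomputable def sphereRow : (Fin 3 → SphereRing) →ₗ[SphereRing] (Fin 1 → SphereRing) :=
  (Matrix.of ![![sphereMk (X 0), sphereMk (X 1), sphereMk (X 2)]]).mulVecLin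

lemma eval_zero_of_mk_zero (q : MvPolynomial (Fin 3) ℝ) (hq : sphereMk q = 0)
    (p : Fin 3 → ℝ) (hp : p 0 ^ 2 + p 1 ^ 2 + p 2 ^ 2 = 1) : eval p q = 0 := by
  rw [sphereMk, Ideal.Quotient.eq_zero_iff_mem, Ideal.mem_span_singleton] at hq
  obtain ⟨r, hr⟩ := hq
  have hs : eval p spherePoly = 0 := by
    simp [spherePoly]
    linarith
  rw [hr, map_mul, hs, zero_mul]

set_option maxHeartbeats 1000000 in
theorem stmt_13
    (hcompl : ∃ M : Matrix (Fin 3) (Fin 3) SphereRing,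
        IsUnit M ∧ M 0 = ![sphereMk (X 0), sphereMk (X 1), sphereMk (X 2)]) :
    -- the kernel `P` is free of rank 2
    Nonempty (LinearMap.ker sphereRow ≃ₗ[SphereRing] (Fin 2 → SphereRing)) ∧
    -- a surjection `P → A` yields `h₁, h₂, h₃` with
    -- `x h₁ + y h₂ + z h₃ = 0` and `⟨h₁, h₂, h₃⟩ = A`
    ∃ h : Fin 3 → MvPolynomial (Fin 3) ℝ,
      sphereMk (X 0 * h 0 + X 1 * h 1 + X 2 * h 2) = 0 ∧
      Ideal.span {sphereMk (h 0), sphereMk (h 1), sphereMk (h 2)} = ⊤ ∧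
      -- evaluating at points of `S²` gives a nowhere-vanishing tangent vector field
      ∀ p : Fin 3 → ℝ, p 0 ^ 2 + p 1 ^ 2 + p 2 ^ 2 = 1 →
        (∑ i, p i * MvPolynomial.eval p (h i)) = 0 ∧ ∃ i, MvPolynomial.eval p (h i) ≠ 0 := by
  obtain ⟨M, hMu, hM0⟩ := hcompl
  obtain ⟨u, hu⟩ := hMu
  set N : Matrix (Fin 3) (Fin 3) SphereRing := ↑u⁻¹ with hN
  have hMN : M * N = 1 := by rw [← hu]; exact u.mul_inv
  have hNM : N * M = 1 := by rw [← hu]; exact u.inv_mul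
  -- key description of sphereRow
  have hval : ∀ v : Fin 3 → SphereRing, sphereRow v = fun _ => M.mulVec v 0 := by
    intro v
    funext j
    have hj : j = 0 := Subsingleton.elim _ _
    subst hj
    simp [sphereRow, Matrix.mulVecLin_apply, Matrix.mulVec, hM0]
  have hker : ∀ v : Fin 3 → SphereRing,
      v ∈ LinearMap.ker sphereRow ↔ M.mulVec v 0 = 0 := by
    intro v
    rw [LinearMap.mem_ker, hval v]
    constructor
    · intro h; exact congrFun h 0
    · intro h; funext j; exact h
  constructor
  · -- the kernel is free of rank 2
    -- f : ker → Fin 2 → A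
    set f : LinearMap.ker sphereRow →ₗ[SphereRing] (Fin 2 → SphereRing) :=
      LinearMap.pi (fun i => LinearMap.proj i.succ ∘ₗ M.mulVecLin ∘ₗ
        (LinearMap.ker sphereRow).subtype) with hf
    set emb : (Fin 2 → SphereRing) →ₗ[SphereRing] (Fin 3 → SphereRing) :=
      LinearMap.pi (fun j => Fin.cases 0 LinearMap.proj j) with hemb
    have hemb0 : ∀ w : Fin 2 → SphereRing, emb w 0 = 0 := fun w => rfl
    have hembs : ∀ (w : Fin 2 → SphereRing) (i : Fin 2), emb w i.succ = w i := fun w i => rfl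
    have hg : ∀ w : Fin 2 → SphereRing,
        N.mulVecLin (emb w) ∈ LinearMap.ker sphereRow := by
      intro w
      rw [hker]
      have : M.mulVec (N.mulVec (emb w)) = emb w := by
        rw [Matrix.mulVec_mulVec, hMN, Matrix.one_mulVec]
      simpa [Matrix.mulVecLin_apply, this] using hemb0 w
    set g : (Fin 2 → SphereRing) →ₗ[SphereRing] LinearMap.ker sphereRow :=
      LinearMap.codRestrict _ (N.mulVecLin ∘ₗ emb) hg with hgdef
    refine ⟨LinearEquiv.ofLinear f g ?_ ?_⟩
    · apply LinearMap.ext; intro w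
      funext i
      simp only [LinearMap.comp_apply, LinearMap.id_apply, hf, LinearMap.pi_apply,
        hgdef, LinearMap.codRestrict_apply, Submodule.coe_subtype, LinearMap.proj_apply,
        Matrix.mulVecLin_apply]
      rw [Matrix.mulVec_mulVec, hMN, Matrix.one_mulVec, hembs]
    · apply LinearMap.ext; intro v
      have hv0 : M.mulVec (v : Fin 3 → SphereRing) 0 = 0 := (hker v).mp v.2
      have key : emb (f v) = M.mulVec (v : Fin 3 → SphereRing) := by
        funext j
        refine Fin.cases ?_ (fun i => ?_) j
        · rw [hemb0, hv0]
        · rw [hembs]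
          simp [hf, Matrix.mulVecLin_apply]
      apply Subtype.ext
      simp only [LinearMap.comp_apply, LinearMap.id_apply, hgdef,
        LinearMap.codRestrict_apply, Matrix.mulVecLin_apply]
      rw [key, Matrix.mulVec_mulVec, hNM, Matrix.one_mulVec]
  · -- construct h
    have hex : ∀ k : Fin 3, ∃ q : MvPolynomial (Fin 3) ℝ, sphereMk q = N k 1 :=
      fun k => Ideal.Quotient.mk_surjective _
    choose H hH using hex
    have hex' : ∀ k : Fin 3, ∃ q : MvPolynomial (Fin 3) ℝ, sphereMk q = M 1 k :=
      fun k => Ideal.Quotient.mk_surjective _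
    choose G hG using hex'
    have h01 : sphereMk (X 0) * N 0 1 + sphereMk (X 1) * N 1 1 + sphereMk (X 2) * N 2 1 = 0 := by
      have h := congrFun (congrFun hMN 0) 1
      rw [Matrix.mul_apply, Fin.sum_univ_three, hM0] at h
      rw [Matrix.one_apply_ne (by decide)] at h
      simpa only [Matrix.cons_val_zero, Matrix.cons_val_one, Matrix.head_cons,
        Matrix.cons_val_two, Matrix.tail_cons] using h
    have h11 : M 1 0 * N 0 1 + M 1 1 * N 1 1 + M 1 2 * N 2 1 = 1 := by
      have h := congrFun (congrFun hMN 1) 1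
      rw [Matrix.mul_apply, Fin.sum_univ_three] at h
      rw [Matrix.one_apply_eq] at h
      exact h
    have hmk0 : sphereMk (X 0 * H 0 + X 1 * H 1 + X 2 * H 2) = 0 := by
      simp only [map_add, map_mul, hH]
      exact h01
    have hmk1 : sphereMk (G 0 * H 0 + G 1 * H 1 + G 2 * H 2 - 1) = 0 := by
      simp only [map_sub, map_add, map_mul, map_one, hG, hH]
      rw [h11, sub_self]
    refine ⟨H, hmk0, ?_, ?_⟩
    · rw [Ideal.eq_top_iff_one]
      have : (1 : SphereRing) = M 1 0 * sphereMk (H 0) + M 1 1 * sphereMk (H 1)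
          + M 1 2 * sphereMk (H 2) := by rw [hH 0, hH 1, hH 2, h11]
      rw [this]
      refine Ideal.add_mem _ (Ideal.add_mem _ ?_ ?_) ?_
      · exact Ideal.mul_mem_left _ _ (Ideal.subset_span (Set.mem_insert _ _))
      · exact Ideal.mul_mem_left _ _ (Ideal.subset_span
          (Set.mem_insert_of_mem _ (Set.mem_insert _ _)))
      · exact Ideal.mul_mem_left _ _ (Ideal.subset_span
          (Set.mem_insert_of_mem _ (Set.mem_insert_of_mem _ rfl)))
    · intro p hp
      constructor
      · have := eval_zero_of_mk_zero _ hmk0 p hp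
        simp only [map_add, map_mul, eval_X] at this
        simpa [Fin.sum_univ_three] using this
      · have := eval_zero_of_mk_zero _ hmk1 p hp
        simp only [map_sub, map_add, map_mul, map_one] at this
        by_contra hcon
        push_neg at hcon
        rw [hcon 0, hcon 1, hcon 2] at this
        simp at this
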